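/- Let G be a non-abelian finite p-group. Then [x,G] = G' if and only if x ∉ D. Furthermore, for every maximal subgroup T of G' that is normal in G, one has Φ(G) ≤ D(T) and log_p |G : D(T)| is even. -/

import Mathlib

/-!
STATEMENT 9: Let G be a non-abelian finite p-group.  Then [x,G] = G' if and
only if x ∉ D.  Furthermore, for every maximal subgroup T of G' that is normal
in G, one has Φ(G) ≤ D(T) and log_p |G : D(T)| is even.

Here, for T normal in G, D(T) is the preimage in G of the centre of G/T (the
largest subgroup of G with [D(T),G] ≤ T); `IsMaxIn G' T` says that T is a
maximal (proper) subgroup of G' = `commutator G`; D is the union of the D(T)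
over all maximal subgroups T of G' that are normal in G; [x,G] is the subgroup
generated by {[x,g] : g ∈ G}; Φ(G) = `frattini G`; and "log_p |G : D(T)| is
even" is expressed as |G : D(T)| = p^(2m) for some m (the index is
automatically a power of p).
-/

/-- For `T` normal in `G`, the subgroup `D(T)` with `D(T)/T = Z(G/T)`. -/
def Dsub {G : Type*} [Group G] (T : Subgroup G) [T.Normal] : Subgroup G :=
  (Subgroup.center (G ⧸ T)).comap (QuotientGroup.mk' T)

/-- `T` is a maximal proper subgroup of the subgroup `K`. -/
def IsMaxIn {G : Type*} [Group G] (K T : Subgroup G) : Prop :=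
  T < K ∧ ∀ S : Subgroup G, T < S → S ≤ K → S = K

open scoped commutatorElement

open Subgroup

section Helpers
variable {Q : Type*} [Group Q]

lemma comm_central (hc : commutator Q ≤ Subgroup.center Q) (a q : Q) :
    ⁅a, q⁆ ∈ Subgroup.center Q :=
  hc (Subgroup.commutator_mem_commutator (Subgroup.mem_top a) (Subgroup.mem_top q))

/-- If all commutators are central, `q ↦ ⁅a, q⁆` is a homomorphism. -/
def commHom (hc : commutator Q ≤ Subgroup.center Q) (a : Q) : Q →* Q where
  toFun q := ⁅a, q⁆
  map_one' := commutatorElement_one_right a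
  map_mul' q r := by
    have h1 : ∀ g : Q, g * ⁅a, r⁆ = ⁅a, r⁆ * g :=
      fun g => Subgroup.mem_center_iff.mp (comm_central hc a r) g
    have key : ⁅a, q * r⁆ = ⁅a, q⁆ * (q * ⁅a, r⁆ * q⁻¹) := by
      simp only [commutatorElement_def]; group
    show ⁅a, q * r⁆ = ⁅a, q⁆ * ⁅a, r⁆
    rw [key, h1 q, mul_assoc, mul_inv_cancel, mul_one]

@[simp] lemma commHom_apply (hc : commutator Q ≤ Subgroup.center Q) (a q : Q) :
    commHom hc a q = ⁅a, q⁆ := rfl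

end Helpers

section Helpers2
variable {p : ℕ} {Q : Type*} [Group Q] [Finite Q]

lemma card_eq_prime_of_no_mid (hp : p.Prime) (hQ : IsPGroup p Q) (C : Subgroup Q)
    (hne : C ≠ ⊥) (hmid : ∀ S : Subgroup Q, S ≤ C → S = ⊥ ∨ S = C) :
    Nat.card C = p := by
  haveI := (Subgroup.nontrivial_iff_ne_bot C).mpr hne
  obtain ⟨⟨c, hcC⟩, hc1⟩ := exists_ne (1 : C)
  have hc1' : c ≠ 1 := fun h => hc1 (Subtype.ext h)
  obtain ⟨k, hk⟩ := hQ c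
  obtain ⟨j, hj, hjo⟩ := (Nat.dvd_prime_pow hp).mp (orderOf_dvd_of_pow_eq_one hk)
  have hj1 : 1 ≤ j := by
    rcases Nat.eq_zero_or_pos j with h | h
    · subst h; simp at hjo; exact absurd hjo hc1'
    · exact h
  set d := c ^ p ^ (j - 1) with hd
  have hod : orderOf d = p := by
    rw [hd, orderOf_pow, hjo, Nat.gcd_eq_right (pow_dvd_pow p (Nat.sub_le j 1)),
      Nat.pow_div (Nat.sub_le j 1) hp.pos, Nat.sub_sub_self hj1, pow_one]
  have hd1 : d ≠ 1 := by
    intro h; rw [h, orderOf_one] at hod; exact hp.ne_one hod.symm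
  have hdC : d ∈ C := C.pow_mem hcC _
  have hzle : Subgroup.zpowers d ≤ C := Subgroup.zpowers_le.mpr hdC
  rcases hmid _ hzle with h | h
  · exact absurd ((Subgroup.eq_bot_iff_forall _).mp h d (Subgroup.mem_zpowers d)) hd1
  · rw [← h, Nat.card_zpowers, hod]

end Helpers2

lemma normal_inf_center_ne_bot {G : Type*} [Group G] [Finite G] {p : ℕ} (hp : p.Prime)
    (hG : IsPGroup p G) (N : Subgroup G) [hN : N.Normal] (hne : N ≠ ⊥) :
    ∃ z : G, z ∈ N ∧ z ∈ Subgroup.center G ∧ z ≠ 1 := by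
  haveI : Fact p.Prime := ⟨hp⟩
  letI : MulAction G N := MulAction.compHom N (MulAut.conjNormal (G := G) (H := N))
  have hsmul : ∀ (g : G) (n : N), ((g • n : N) : G) = g * n * g⁻¹ := fun g n => rfl
  have hpcard : p ∣ Nat.card N := by
    obtain ⟨n, hn⟩ := IsPGroup.iff_card.mp (hG.to_subgroup N)
    have h1 : Nat.card N ≠ 1 := by
      rw [ne_eq, Subgroup.card_eq_one]; exact hne
    rcases Nat.eq_zero_or_pos n with h | h
    · subst h; simp at hn; exact absurd hn hne
    · rw [hn]; exact dvd_pow_self p h.ne'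
  have hone : (1 : N) ∈ MulAction.fixedPoints G N := by
    intro g
    ext
    rw [hsmul]; simp
  obtain ⟨b, hb, hb1⟩ := hG.exists_fixed_point_of_prime_dvd_card_of_fixed_point N hpcard hone
  refine ⟨(b : G), b.2, Subgroup.mem_center_iff.mpr fun g => ?_, fun h => hb1 ?_⟩
  · have h2 := congrArg (Subtype.val) (hb g)
    rw [hsmul] at h2
    exact mul_inv_eq_iff_eq_mul.mp h2
  · exact Subtype.ext h.symm

universe u

lemma even_index_center {p : ℕ} (hp : p.Prime) :
    ∀ (n : ℕ) (Q : Type u) [Group Q] [Finite Q], Nat.card Q ≤ n →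
      commutator Q ≤ Subgroup.center Q → Nat.card (commutator Q) ∣ p →
      ∃ m : ℕ, (Subgroup.center Q).index = p ^ (2 * m) := by
  intro n
  induction n with
  | zero =>
    intro Q _ _ hcard _ _
    exact absurd hcard (by simpa using Nat.card_pos.ne')
  | succ n ih =>
    intro Q _ _ hcard hcomm hdvd
    by_cases hab : commutator Q = ⊥
    · refine ⟨0, ?_⟩
      have hc : Subgroup.center Q = ⊤ := by
        rw [eq_top_iff]
        intro z _
        rw [Subgroup.mem_center_iff]
        intro g
        have h1 : ⁅g, z⁆ ∈ commutator Q :=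
          Subgroup.commutator_mem_commutator (Subgroup.mem_top g) (Subgroup.mem_top z)
        rw [hab, Subgroup.mem_bot] at h1
        exact commutatorElement_eq_one_iff_mul_comm.mp h1
      rw [hc, mul_zero, pow_zero, Subgroup.index_top]
    · -- find non-commuting pair
      have hxy : ∃ x y : Q, ⁅x, y⁆ ≠ 1 := by
        by_contra hcon
        push_neg at hcon
        exact hab (le_bot_iff.mp (Subgroup.commutator_le.mpr fun a _ b _ =>
          Subgroup.mem_bot.mpr (hcon a b)))
      obtain ⟨x, y, hc1⟩ := hxy
      set c := ⁅x, y⁆ with hcdef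
      -- the commutator subgroup is cyclic of order p, generated by c
      have hccard : Nat.card (commutator Q) = p := by
        rcases (Nat.Prime.eq_one_or_self_of_dvd hp _ hdvd).symm with h | h
        · exact h.symm ▸ rfl
        · exact absurd (Subgroup.card_eq_one.mp h) hab
      have hcmem : c ∈ commutator Q :=
        Subgroup.commutator_mem_commutator (Subgroup.mem_top x) (Subgroup.mem_top y)
      have hordc : orderOf c = p := by
        have h1 : orderOf c ∣ p := by
          rw [← Nat.card_zpowers] at *
          exact dvd_trans (Subgroup.card_dvd_of_le (Subgroup.zpowers_le.mpr hcmem)) hdvd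
        rcases (Nat.Prime.eq_one_or_self_of_dvd hp _ h1).symm with h | h
        · exact h
        · exact absurd (orderOf_eq_one_iff.mp h) hc1
      have hzc : Subgroup.zpowers c = commutator Q := by
        apply Subgroup.eq_of_le_of_card_ge (Subgroup.zpowers_le.mpr hcmem)
        rw [hccard, Nat.card_zpowers, hordc]
      -- two homomorphisms
      set f := commHom hcomm x with hf
      set f₂ := commHom hcomm y with hf₂
      set F := f.prod f₂ with hF
      have hfz : ∀ g : Q, f g ∈ Subgroup.zpowers c := fun g => by
        rw [hzc]
        exact Subgroup.commutator_mem_commutator (Subgroup.mem_top x) (Subgroup.mem_top g)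
      have hfz₂ : ∀ g : Q, f₂ g ∈ Subgroup.zpowers c := fun g => by
        rw [hzc]
        exact Subgroup.commutator_mem_commutator (Subgroup.mem_top y) (Subgroup.mem_top g)
      have hfx : f x = 1 := commutatorElement_self x
      have hfy : f y = c := rfl
      have hf₂y : f₂ y = 1 := commutatorElement_self y
      have hf₂x : f₂ x = c⁻¹ := by
        show ⁅y, x⁆ = c⁻¹
        rw [hcdef, commutatorElement_inv]
      -- the range of F is zpowers c × zpowers c
      have hrange : F.range = (Subgroup.zpowers c).prod (Subgroup.zpowers c) := by
        apply le_antisymm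
        · rintro ⟨a, b⟩ ⟨g, hg⟩
          rw [← hg]
          exact Subgroup.mem_prod.mpr ⟨hfz g, hfz₂ g⟩
        · rintro ⟨a, b⟩ hab2
          obtain ⟨ha, hb⟩ := Subgroup.mem_prod.mp hab2
          obtain ⟨i, hi⟩ := ha
          obtain ⟨j, hj⟩ := hb
          refine ⟨y ^ i * x ^ (-j), ?_⟩
          have h1 : F (y ^ i * x ^ (-j)) =
              (f (y ^ i) * f (x ^ (-j)), f₂ (y ^ i) * f₂ (x ^ (-j))) := by
            simp [hF, MonoidHom.prod_apply, map_mul]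
          rw [h1, map_zpow, map_zpow, map_zpow, map_zpow, hfx, hfy, hf₂x, hf₂y]
          simp only [one_zpow, mul_one, one_mul, inv_zpow, zpow_neg, inv_inv]
          exact Prod.ext (by simpa using hi) (by simpa using hj)
      -- H = kernel of F, of index p^2
      set H := F.ker with hH
      have hHindex : H.index = p ^ 2 := by
        rw [hH, Subgroup.index_ker, hrange]
        have : Nat.card ((Subgroup.zpowers c).prod (Subgroup.zpowers c)) = p * p := by
          rw [Nat.card_congr (Subgroup.prodEquiv _ _).toEquiv, Nat.card_prod,
            Nat.card_zpowers, hordc]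
        rw [this, sq]
      -- center of Q is inside H
      have hmemH : ∀ g : Q, g ∈ H ↔ (⁅x, g⁆ = 1 ∧ ⁅y, g⁆ = 1) := by
        intro g
        rw [hH, MonoidHom.mem_ker, hF, MonoidHom.prod_apply, Prod.ext_iff]
        exact Iff.rfl
      have hcent_le_H : Subgroup.center Q ≤ H := by
        intro z hz
        rw [hmemH]
        constructor
        · exact commutatorElement_eq_one_iff_mul_comm.mpr (Subgroup.mem_center_iff.mp hz x)
        · exact commutatorElement_eq_one_iff_mul_comm.mpr (Subgroup.mem_center_iff.mp hz y)
      -- decomposition of arbitrary elements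
      have hdecomp : ∀ g : Q, ∃ w ∈ H, ∃ i j : ℤ, g = w * (y ^ i * x ^ j) := by
        intro g
        obtain ⟨i, hi⟩ := Subgroup.mem_zpowers_iff.mp (hfz g)
        obtain ⟨j, hj⟩ := Subgroup.mem_zpowers_iff.mp (hfz₂ g)
        refine ⟨g * (y ^ i * x ^ (-j))⁻¹, ?_, i, -j, by group⟩
        have h1 : f (y ^ i * x ^ (-j)) = c ^ i := by
          rw [map_mul, map_zpow, map_zpow, hfx, hfy, one_zpow, mul_one]
        have h2 : f₂ (y ^ i * x ^ (-j)) = c ^ j := by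
          rw [map_mul, map_zpow, map_zpow, hf₂x, hf₂y, one_zpow, one_mul, inv_zpow,
            zpow_neg, inv_inv]
        rw [hmemH]
        constructor
        · show f (g * (y ^ i * x ^ (-j))⁻¹) = 1
          rw [map_mul, map_inv, h1, hi, mul_inv_cancel]
        · show f₂ (g * (y ^ i * x ^ (-j))⁻¹) = 1
          rw [map_mul, map_inv, h2, hj, mul_inv_cancel]
      -- center of H equals center of Q intersected with H
      have hZH : Subgroup.center ↥H = (Subgroup.center Q).subgroupOf H := by
        apply le_antisymm
        · intro h hcent
          rw [Subgroup.mem_subgroupOf, Subgroup.mem_center_iff]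
          intro g
          have hxh : Commute x (↑h : Q) := by
            have := ((hmemH ↑h).mp h.2).1
            exact commutatorElement_eq_one_iff_mul_comm.mp this
          have hyh : Commute y (↑h : Q) := by
            have := ((hmemH ↑h).mp h.2).2
            exact commutatorElement_eq_one_iff_mul_comm.mp this
          have hwh : ∀ w : Q, w ∈ H → Commute w (↑h : Q) := by
            intro w hw
            have := Subgroup.mem_center_iff.mp hcent ⟨w, hw⟩
            exact congrArg Subtype.val this
          obtain ⟨w, hw, i, j, rfl⟩ := hdecomp g
          exact Commute.mul_left (hwh w hw)
            (Commute.mul_left (hyh.zpow_left i) (hxh.zpow_left j))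
        · intro h hh
          rw [Subgroup.mem_subgroupOf] at hh
          rw [Subgroup.mem_center_iff]
          intro k
          ext
          exact Subgroup.mem_center_iff.mp hh ↑k
      -- apply the induction hypothesis to H
      have hppos : 1 < p ^ 2 := Nat.one_lt_pow (by norm_num) hp.one_lt
      have hcardH : Nat.card ↥H ≤ n := by
        have hmul := H.card_mul_index
        rw [hHindex] at hmul
        have hlt : Nat.card ↥H < Nat.card Q := by
          nlinarith [Nat.card_pos (α := ↥H)]
        omega
      have hcommH : commutator ↥H ≤ Subgroup.center ↥H := by
        rw [_root_.commutator_def, Subgroup.commutator_le]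
        intro a _ b _
        rw [Subgroup.mem_center_iff]
        intro k
        ext
        push_cast
        have h1 : (⁅(a : Q), (b : Q)⁆ : Q) ∈ Subgroup.center Q := comm_central hcomm _ _
        exact Subgroup.mem_center_iff.mp h1 ↑k
      have hdvdH : Nat.card (commutator ↥H) ∣ p := by
        have heq : Nat.card (commutator ↥H) =
            Nat.card ((commutator ↥H).map H.subtype) :=
          Nat.card_congr ((commutator ↥H).equivMapOfInjective H.subtype
            H.subtype_injective).toEquiv
        have hle : (commutator ↥H).map H.subtype ≤ commutator Q := by
          rw [_root_.commutator_def, Subgroup.map_commutator]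
          exact Subgroup.commutator_mono le_top le_top
        rw [heq]
        exact dvd_trans (Subgroup.card_dvd_of_le hle) hdvd
      obtain ⟨m, hm⟩ := ih ↥H hcardH hcommH hdvdH
      refine ⟨m + 1, ?_⟩
      have hrel : (Subgroup.center Q).relIndex H = p ^ (2 * m) := by
        rw [← hm, hZH]; rfl
      rw [← Subgroup.relIndex_mul_index hcent_le_H, hrel, hHindex, ← pow_add]
      ring_nf

section Main
variable {p : ℕ} {G : Type u} [Group G] [Finite G]

lemma quot_facts (hp : p.Prime) (hG : IsPGroup p G) (T : Subgroup G) [hT : T.Normal]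
    (hmax : IsMaxIn (commutator G) T) :
    Nat.card (commutator (G ⧸ T)) = p ∧
      commutator (G ⧸ T) ≤ Subgroup.center (G ⧸ T) := by
  set C := commutator (G ⧸ T) with hC
  have hsurj := QuotientGroup.mk'_surjective T
  have hCmap : C = Subgroup.map (QuotientGroup.mk' T) (commutator G) := by
    rw [hC, _root_.commutator_def, _root_.commutator_def, Subgroup.map_commutator,
      Subgroup.map_top_of_surjective _ hsurj]
  have hCne : C ≠ ⊥ := by
    rw [hCmap, ne_eq, Subgroup.map_eq_bot_iff, QuotientGroup.ker_mk']
    intro hle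
    exact (lt_irrefl T (lt_of_lt_of_le hmax.1 hle))
  have hmid : ∀ S : Subgroup (G ⧸ T), S ≤ C → S = ⊥ ∨ S = C := by
    intro S hSle
    by_cases hSbot : S = ⊥
    · exact Or.inl hSbot
    right
    set S' := Subgroup.comap (QuotientGroup.mk' T) S with hS'
    have hTle : T ≤ S' := by
      intro t ht
      rw [hS', Subgroup.mem_comap]
      have : QuotientGroup.mk' T t = 1 := (QuotientGroup.eq_one_iff t).mpr ht
      rw [this]; exact S.one_mem
    have hTne : T ≠ S' := by
      haveI := (Subgroup.nontrivial_iff_ne_bot S).mpr hSbot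
      obtain ⟨⟨s, hsS⟩, hs1⟩ := exists_ne (1 : S)
      obtain ⟨g, hg⟩ := hsurj s
      intro hEq
      apply hs1
      ext
      show s = 1
      by_contra hs1'
      have hgS' : g ∈ S' := by rw [hS', Subgroup.mem_comap, hg]; exact hsS
      rw [← hEq] at hgS'
      exact hs1' (hg ▸ (QuotientGroup.eq_one_iff g).mpr hgS')
    have hS'le : S' ≤ commutator G := by
      have h1 : S' ≤ Subgroup.comap (QuotientGroup.mk' T) C := Subgroup.comap_mono hSle
      rw [hCmap, Subgroup.comap_map_eq, QuotientGroup.ker_mk'] at h1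
      rwa [sup_of_le_left hmax.1.le] at h1
    have := hmax.2 S' (lt_of_le_of_ne hTle hTne) hS'le
    rw [hCmap, ← this, hS', Subgroup.map_comap_eq_self_of_surjective hsurj]
  constructor
  · exact card_eq_prime_of_no_mid hp (hG.to_quotient T) C hCne hmid
  · have hnorm : C.Normal := Subgroup.commutator_normal ⊤ ⊤
    obtain ⟨z, hzC, hzcen, hz1⟩ :=
      normal_inf_center_ne_bot hp (hG.to_quotient T) C hCne
    rcases hmid (C ⊓ Subgroup.center (G ⧸ T)) inf_le_left with h | h
    · exact absurd ((Subgroup.eq_bot_iff_forall _).mp h z ⟨hzC, hzcen⟩) hz1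
    · rw [← h]; exact inf_le_right

end Main

section Main2
variable {p : ℕ} {G : Type u} [Group G] [Finite G]

lemma normal_of_le_center {H : Subgroup G} (hle : H ≤ Subgroup.center G) : H.Normal := by
  constructor
  intro h hh g
  have := (Subgroup.mem_center_iff.mp (hle hh) g).symm
  rw [← this, mul_assoc, mul_inv_cancel, mul_one]
  exact hh

lemma exists_maxIn (hp : p.Prime) (hG : IsPGroup p G) (N : Subgroup G) (hNnorm : N.Normal)
    (hle : N ≤ commutator G) (hne : N ≠ commutator G) :
    ∃ T : Subgroup G, ∃ _ : T.Normal, IsMaxIn (commutator G) T ∧ N ≤ T := by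
  haveI : Finite (Subgroup G) :=
    Finite.of_injective (fun H => (H : Set G)) SetLike.coe_injective
  set 𝒮 : Set (Subgroup G) := {W | N ≤ W ∧ W ≤ commutator G ∧ W ≠ commutator G ∧ W.Normal}
    with h𝒮
  have hN𝒮 : N ∈ 𝒮 := ⟨le_refl N, hle, hne, hNnorm⟩
  obtain ⟨W, hW𝒮, hWmax'⟩ :=
    Set.Finite.exists_maximalFor id 𝒮 (Set.toFinite 𝒮) ⟨N, hN𝒮⟩
  obtain ⟨hNW, hWle, hWne, hWnorm⟩ := hW𝒮
  haveI := hWnorm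
  have hWmax : ∀ a ∈ 𝒮, W ≤ a → W = a := fun a ha h => le_antisymm h (hWmax' ha h)
  have hsurj := QuotientGroup.mk'_surjective W
  set C := Subgroup.map (QuotientGroup.mk' W) (commutator G) with hCdef
  have hCne : C ≠ ⊥ := by
    rw [hCdef, ne_eq, Subgroup.map_eq_bot_iff, QuotientGroup.ker_mk']
    intro h
    exact hWne (le_antisymm hWle h)
  haveI hCnorm : C.Normal := (Subgroup.commutator_normal ⊤ ⊤).map _ hsurj
  obtain ⟨z, hzC, hzcen, hz1⟩ :=
    normal_inf_center_ne_bot hp (hG.to_quotient W) C hCne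
  -- the preimage of ⟨z⟩
  have hCcomap : Subgroup.comap (QuotientGroup.mk' W) C = commutator G := by
    rw [hCdef, Subgroup.comap_map_eq, QuotientGroup.ker_mk', sup_of_le_left hWle]
  have hKeq : Subgroup.comap (QuotientGroup.mk' W) (Subgroup.zpowers z) = commutator G := by
    set K := Subgroup.comap (QuotientGroup.mk' W) (Subgroup.zpowers z) with hK
    have hKle : K ≤ commutator G := by
      rw [← hCcomap]
      exact Subgroup.comap_mono (Subgroup.zpowers_le.mpr hzC)
    haveI hKnorm : K.Normal :=
      (normal_of_le_center (Subgroup.zpowers_le.mpr hzcen)).comap _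
    have hWK : W ≤ K := by
      intro t ht
      rw [hK, Subgroup.mem_comap]
      have : QuotientGroup.mk' W t = 1 := (QuotientGroup.eq_one_iff t).mpr ht
      rw [this]; exact Subgroup.one_mem _
    have hWKne : W ≠ K := by
      obtain ⟨g, hg⟩ := hsurj z
      intro hEq
      apply hz1
      have hgK : g ∈ K := by rw [hK, Subgroup.mem_comap, hg]; exact Subgroup.mem_zpowers z
      rw [← hEq] at hgK
      rw [← hg]
      exact (QuotientGroup.eq_one_iff g).mpr hgK
    by_contra hKne
    exact hWKne (hWmax K ⟨le_trans hNW hWK, hKle, hKne, hKnorm⟩ hWK)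
  have hCcen : C ≤ Subgroup.center (G ⧸ W) := by
    have : C = Subgroup.zpowers z := by
      rw [hCdef, ← hKeq, Subgroup.map_comap_eq_self_of_surjective hsurj]
    rw [this]
    exact Subgroup.zpowers_le.mpr hzcen
  refine ⟨W, hWnorm, ⟨lt_of_le_of_ne hWle hWne, ?_⟩, hNW⟩
  intro S hWS hSle
  by_contra hSne
  -- S is normal since its image is central
  have hScomap : Subgroup.comap (QuotientGroup.mk' W) (Subgroup.map (QuotientGroup.mk' W) S)
      = S := by
    rw [Subgroup.comap_map_eq, QuotientGroup.ker_mk', sup_of_le_left hWS.le]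
  haveI hSnorm : S.Normal := by
    rw [← hScomap]
    exact (normal_of_le_center (le_trans (Subgroup.map_mono hSle) hCcen)).comap _
  exact (ne_of_lt hWS) (hWmax S ⟨le_trans hNW hWS.le, hSle, hSne, hSnorm⟩ hWS.le)

end Main2

section Main3
open Pointwise
variable {p : ℕ} {G : Type u} [Group G] [Finite G]

lemma normal_of_commutator_le {M : Subgroup G} (hM : ∀ a b : G, ⁅a, b⁆ ∈ M) : M.Normal := by
  constructor
  intro m hm g
  have h1 : g * m * g⁻¹ = ⁅g, m⁆ * m := by group
  rw [h1]
  exact M.mul_mem (hM g m) hm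

lemma frattini_le_of (hp : p.Prime) (D : Subgroup G)
    (hcommD : ∀ a b : G, ⁅a, b⁆ ∈ D) (hpD : ∀ a : G, a ^ p ∈ D) :
    frattini G ≤ D := by
  intro g hg
  by_contra hgD
  haveI : Finite (Subgroup G) :=
    Finite.of_injective (fun H => (H : Set G)) SetLike.coe_injective
  set 𝒯 : Set (Subgroup G) := {M | D ≤ M ∧ g ∉ M} with h𝒯
  obtain ⟨M, hM𝒯, hMmax'⟩ :=
    Set.Finite.exists_maximalFor id 𝒯 (Set.toFinite 𝒯) ⟨D, le_refl D, hgD⟩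
  obtain ⟨hDM, hgM⟩ := hM𝒯
  have hMmax : ∀ a ∈ 𝒯, M ≤ a → M = a := fun a ha h => le_antisymm h (hMmax' ha h)
  have hMcomm : ∀ a b : G, ⁅a, b⁆ ∈ M := fun a b => hDM (hcommD a b)
  haveI hMnorm : M.Normal := normal_of_commutator_le hMcomm
  have hMp : ∀ a : G, a ^ p ∈ M := fun a => hDM (hpD a)
  -- M is a coatom
  have hcoatom : IsCoatom M := by
    constructor
    · intro h; rw [h] at hgM; exact hgM (Subgroup.mem_top g)
    · intro U hMU
      have hgU : g ∈ U := by
        by_contra hgU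
        exact (ne_of_lt hMU) (hMmax U ⟨le_trans hDM hMU.le, hgU⟩ hMU.le)
      rw [eq_top_iff]
      intro u _
      -- first: key dichotomy using maximality on M ⊔ zpowers u
      by_cases hu : g ∈ M ⊔ Subgroup.zpowers u
      · -- then u ∈ M ⊔ zpowers g ≤ U
        have hmem : g ∈ (M : Set G) * (Subgroup.zpowers u : Set G) := by
          have h0 : g ∈ ((M ⊔ Subgroup.zpowers u : Subgroup G) : Set G) := hu
          rwa [Subgroup.normal_mul] at h0
        obtain ⟨m, hm, w, hw, hmw⟩ := hmem
        obtain ⟨k, hk⟩ := Subgroup.mem_zpowers_iff.mp hw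
        by_cases hdvd : (p : ℤ) ∣ k
        · exfalso
          obtain ⟨t, ht⟩ := hdvd
          have : w ∈ M := by
            rw [← hk, ht, zpow_mul, zpow_natCast]
            exact Subgroup.zpow_mem M (hMp u) t
          exact hgM (hmw ▸ M.mul_mem hm this)
        · -- k coprime to p
          have hcop : IsCoprime k (p : ℤ) := by
            rw [Int.isCoprime_iff_gcd_eq_one]
            have h1 : ¬ p ∣ k.natAbs := fun h => hdvd (Int.natCast_dvd.mpr h)
            have h2 : Nat.Coprime p k.natAbs := (hp.coprime_iff_not_dvd).mpr h1
            unfold Int.gcd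
            simpa [Nat.coprime_comm] using h2.symm
          obtain ⟨a, b, hab⟩ := hcop
          have hub : u ∈ M ⊔ Subgroup.zpowers g := by
            have huk : u ^ k ∈ M ⊔ Subgroup.zpowers g := by
              have : u ^ k = m⁻¹ * g := by rw [← hmw, hk]; group
              rw [this]
              exact Subgroup.mul_mem _
                (Subgroup.mem_sup_left (M.inv_mem hm))
                (Subgroup.mem_sup_right (Subgroup.mem_zpowers g))
            have hup : (u : G) ^ (p : ℤ) ∈ M ⊔ Subgroup.zpowers g := by
              rw [zpow_natCast]
              exact Subgroup.mem_sup_left (hMp u)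
            have : u = (u ^ k) ^ a * (u ^ (p : ℤ)) ^ b := by
              rw [← zpow_mul, ← zpow_mul, ← zpow_add, mul_comm k a, mul_comm (p : ℤ) b, hab,
                zpow_one]
            rw [this]
            exact Subgroup.mul_mem _ (Subgroup.zpow_mem _ huk a) (Subgroup.zpow_mem _ hup b)
          exact (sup_le hMU.le (Subgroup.zpowers_le.mpr hgU)) hub
      · -- then M ⊔ zpowers u ∈ 𝒯, so = M, so u ∈ M
        have := hMmax (M ⊔ Subgroup.zpowers u) ⟨le_trans hDM le_sup_left, hu⟩ le_sup_left
        have hu' : u ∈ M := by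
          rw [this]
          exact Subgroup.mem_sup_right (Subgroup.mem_zpowers u)
        exact hMU.le hu'
  exact hgM (frattini_le_coatom hcoatom hg)

end Main3

theorem commutator_word_subgroup_eq_derived_iff_not_mem_D
    {p : ℕ} (hp : p.Prime)
    {G : Type*} [Group G] [Finite G] (hG : IsPGroup p G)
    (hnab : commutator G ≠ ⊥) :
    (∀ x : G, Subgroup.closure {y | ∃ g : G, y = ⁅x, g⁆} = commutator G ↔
      x ∉ {y : G | ∃ (T : Subgroup G) (hT : T.Normal),
        IsMaxIn (commutator G) T ∧ y ∈ @Dsub G _ T hT}) ∧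
    (∀ (T : Subgroup G) (hT : T.Normal), IsMaxIn (commutator G) T →
      frattini G ≤ @Dsub G _ T hT ∧ ∃ m : ℕ, (@Dsub G _ T hT).index = p ^ (2 * m)) := by
  constructor
  · -- part 1
    intro x
    constructor
    · intro hcl
      rintro ⟨T, hTnorm, hTmax, hxD⟩
      have hle : Subgroup.closure {y | ∃ g : G, y = ⁅x, g⁆} ≤ T := by
        rw [Subgroup.closure_le]
        rintro y ⟨g, rfl⟩
        have hx := Subgroup.mem_center_iff.mp (Subgroup.mem_comap.mp hxD)
        have h1 : (QuotientGroup.mk' T) ⁅x, g⁆ = 1 := by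
          rw [map_commutatorElement]
          exact commutatorElement_eq_one_iff_mul_comm.mpr
            (hx ((QuotientGroup.mk' T) g)).symm
        exact (QuotientGroup.eq_one_iff _).mp h1
      rw [hcl] at hle
      exact lt_irrefl T (lt_of_lt_of_le hTmax.1 hle)
    · intro hxD
      by_contra hcl
      set N := Subgroup.closure {y | ∃ g : G, y = ⁅x, g⁆} with hN
      have hNle : N ≤ commutator G := by
        rw [hN, Subgroup.closure_le]
        rintro y ⟨g, rfl⟩
        exact Subgroup.commutator_mem_commutator (Subgroup.mem_top x) (Subgroup.mem_top g)
      have hNnorm : N.Normal := by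
        constructor
        intro n hn h
        have hmap : Subgroup.map (MulAut.conj h).toMonoidHom N ≤ N := by
          rw [hN, MonoidHom.map_closure]
          rw [Subgroup.closure_le]
          rintro y ⟨z, ⟨g, rfl⟩, rfl⟩
          have hid : (MulAut.conj h).toMonoidHom ⁅x, g⁆ = ⁅x, h⁆⁻¹ * ⁅x, h * g⁆ := by
            show h * ⁅x, g⁆ * h⁻¹ = ⁅x, h⁆⁻¹ * ⁅x, h * g⁆
            simp only [commutatorElement_def, mul_inv_rev, inv_inv]
            group
          rw [hid]
          exact N.mul_mem (N.inv_mem (Subgroup.subset_closure ⟨h, rfl⟩))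
            (Subgroup.subset_closure ⟨h * g, rfl⟩)
        exact hmap ⟨n, hn, rfl⟩
      obtain ⟨T, hTnorm, hTmax, hNT⟩ := exists_maxIn hp hG N hNnorm hNle hcl
      apply hxD
      refine ⟨T, hTnorm, hTmax, ?_⟩
      apply Subgroup.mem_comap.mpr
      rw [Subgroup.mem_center_iff]
      intro q
      obtain ⟨g, rfl⟩ := QuotientGroup.mk'_surjective T q
      have h1 : ⁅x, g⁆ ∈ T := hNT (Subgroup.subset_closure ⟨g, rfl⟩)
      have h2 : (QuotientGroup.mk' T) ⁅x, g⁆ = 1 := (QuotientGroup.eq_one_iff _).mpr h1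
      rw [map_commutatorElement] at h2
      exact (commutatorElement_eq_one_iff_mul_comm.mp h2).symm
  · -- part 2
    intro T hTnorm hTmax
    haveI := hTnorm
    obtain ⟨hcard, hcomm⟩ := quot_facts hp hG T hTmax
    have hcommD : ∀ a b : G, ⁅a, b⁆ ∈ @Dsub G _ T hTnorm := by
      intro a b
      apply Subgroup.mem_comap.mpr
      rw [map_commutatorElement]
      exact hcomm (Subgroup.commutator_mem_commutator (Subgroup.mem_top _) (Subgroup.mem_top _))
    have hpD : ∀ a : G, a ^ p ∈ @Dsub G _ T hTnorm := by
      intro a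
      apply Subgroup.mem_comap.mpr
      rw [map_pow]
      set q := (QuotientGroup.mk' T) a with hq
      rw [Subgroup.mem_center_iff]
      intro r
      have hmem : ⁅r, q⁆ ∈ commutator (G ⧸ T) :=
        Subgroup.commutator_mem_commutator (Subgroup.mem_top r) (Subgroup.mem_top q)
      have hpow : ⁅r, q⁆ ^ p = 1 := by
        have h1 : (⟨⁅r, q⁆, hmem⟩ : commutator (G ⧸ T)) ^ p = 1 := by
          rw [← hcard]
          exact pow_card_eq_one'
        have h2 := congrArg (Subtype.val) h1
        push_cast at h2
        exact h2
      have h3 : ⁅r, q ^ p⁆ = 1 := by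
        have h4 : commHom hcomm r (q ^ p) = (commHom hcomm r q) ^ p := map_pow _ _ _
        rw [commHom_apply, commHom_apply] at h4
        rw [h4, hpow]
      exact commutatorElement_eq_one_iff_mul_comm.mp h3
    constructor
    · exact frattini_le_of hp _ hcommD hpD
    · obtain ⟨m, hm⟩ := even_index_center hp (Nat.card (G ⧸ T)) (G ⧸ T) le_rfl hcomm
        (hcard ▸ dvd_refl p)
      refine ⟨m, ?_⟩
      have hidx : (@Dsub G _ T hTnorm).index = (Subgroup.center (G ⧸ T)).index :=
        Subgroup.index_comap_of_surjective _ (QuotientGroup.mk'_surjective T)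
      rw [hidx, hm]
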